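/- Let n ≥ 1 be a natural number, g0 > 0, Isp_s > 0, Isp_t > 0 real numbers. Let Δv_s : ℕ → ℝ, and for each j with 1 ≤ j ≤ n let m_tin0(j), m_req(j), Δv_tin(j), Δv_tout(j) be real numbers. Let m_s0, m_sf : ℕ → ℝ satisfy m_s0(j) = m_sf(j)·exp(Δv_s(j)/(Isp_s·g0)) for 1 ≤ j ≤ n + 1, and m_s0(j+1) = m_sf(j) − m_r(j) for 1 ≤ j ≤ n, where m_r(j) := (m_tin0(j) + m_req(j))·exp(Δv_tout(j)/(Isp_t·g0)) − m_tin0(j)·exp(−Δv_tin(j)/(Isp_t·g0)). Then m_s0(1) = m_sf(n+1)·exp((Σ_{j=1}^{n+1} Δv_s(j))/(Isp_s·g0)) + Σ_{j=1}^{n} [(m_tin0(j) + m_req(j))·exp(Δv_tout(j)/(Isp_t·g0)) − m_tin0(j)·exp(−Δv_tin(j)/(Isp_t·g0))]·exp((Σ_{k=1}^{j} Δv_s(k))/(Isp_s·g0)). -/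
import Mathlib


/-- Closed-form initial (wet) servicer mass in the cooperative multi-target refueling
architecture with `n` targets plus a return transfer. -/
theorem stmt_5 (n : ℕ) (hn : 1 ≤ n) (g0 Isp_s Isp_t : ℝ)
    (hg0 : 0 < g0) (hIsps : 0 < Isp_s) (hIspt : 0 < Isp_t)
    (Δv_s m_tin0 m_req Δv_tin Δv_tout : ℕ → ℝ)
    (m_s0 m_sf : ℕ → ℝ)
    (hrocket : ∀ j : ℕ, 1 ≤ j → j ≤ n + 1 →
      m_s0 j = m_sf j * Real.exp (Δv_s j / (Isp_s * g0)))
    (hmass : ∀ j : ℕ, 1 ≤ j → j ≤ n →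
      m_s0 (j + 1) = m_sf j -
        ((m_tin0 j + m_req j) * Real.exp (Δv_tout j / (Isp_t * g0)) -
          m_tin0 j * Real.exp (-Δv_tin j / (Isp_t * g0)))) :
    m_s0 1 = m_sf (n + 1) *
        Real.exp ((∑ j ∈ Finset.Icc 1 (n + 1), Δv_s j) / (Isp_s * g0)) +
      ∑ j ∈ Finset.Icc 1 n,
        ((m_tin0 j + m_req j) * Real.exp (Δv_tout j / (Isp_t * g0)) -
          m_tin0 j * Real.exp (-Δv_tin j / (Isp_t * g0))) *
          Real.exp ((∑ k ∈ Finset.Icc 1 j, Δv_s k) / (Isp_s * g0)) := by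
  have hexp : ∀ a b : ℝ, Real.exp ((a + b) / (Isp_s * g0)) =
      Real.exp (a / (Isp_s * g0)) * Real.exp (b / (Isp_s * g0)) := by
    intro a b; rw [add_div, Real.exp_add]
  revert hrocket hmass
  induction n, hn using Nat.le_induction with
  | base =>
    intro hrocket hmass
    have h1 := hrocket 1 le_rfl (by norm_num)
    have h2 := hrocket 2 (by norm_num) (by norm_num)
    have hm := hmass 1 le_rfl le_rfl
    have hIcc2 : Finset.Icc 1 2 = {1, 2} := by decide
    have hIcc1 : Finset.Icc 1 1 = {1} := by decide
    simp only [hIcc2, hIcc1, Finset.sum_insert (by decide : (1:ℕ) ∉ ({2} : Finset ℕ)),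
      Finset.sum_singleton]
    rw [h1]
    simp only [hexp]
    have : m_sf 1 = m_sf 2 * Real.exp (Δv_s 2 / (Isp_s * g0)) +
        ((m_tin0 1 + m_req 1) * Real.exp (Δv_tout 1 / (Isp_t * g0)) -
          m_tin0 1 * Real.exp (-Δv_tin 1 / (Isp_t * g0))) := by
      rw [← h2]; linarith [hm]
    rw [this]; ring
  | succ n hn ih =>
    intro hrocket hmass
    have key := ih (fun j hj hj' => hrocket j hj (hj'.trans (by omega)))
      (fun j hj hj' => hmass j hj (hj'.trans (by omega)))
    have hm := hmass (n + 1) (by omega) le_rfl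
    have h2 := hrocket (n + 1 + 1) (by omega) (by omega)
    have hsf : m_sf (n + 1) = m_sf (n + 1 + 1) * Real.exp (Δv_s (n + 1 + 1) / (Isp_s * g0)) +
        ((m_tin0 (n+1) + m_req (n+1)) * Real.exp (Δv_tout (n+1) / (Isp_t * g0)) -
          m_tin0 (n+1) * Real.exp (-Δv_tin (n+1) / (Isp_t * g0))) := by
      rw [← h2]; linarith [hm]
    rw [key, hsf]
    simp only [Finset.sum_Icc_succ_top (show (1:ℕ) ≤ n + 1 by omega),
      Finset.sum_Icc_succ_top (show (1:ℕ) ≤ n + 1 + 1 by omega), hexp]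
    ring
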